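/- For every real α with 0 < α < 1/2 there exists a constant C > 0 such that for every measurable function g : (0,∞) → ℂ with ∫_0^∞ ν^{2α+2}|g(ν)|² dν finite, one has ∑_{n=2}^∞ | ∫_0^{n−1} ν·g(ν)/(n − ν) dν |² ≤ C · ∫_0^∞ ν^{2α+2} |g(ν)|² dν. -/

import Mathlib

open MeasureTheory Real
open Set
open scoped ENNReal

private lemma Jbound {α : ℝ} (hα0 : 0 < α) (hα : α < 1/2) {N : ℝ} (hN : 2 ≤ N) :
    ∫⁻ ν in Ioo (0:ℝ) (N-1), ENNReal.ofReal (ν ^ (-(2*α)) * (N - ν) ^ (-(1+α)))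
      ≤ ENNReal.ofReal (((2:ℝ) ^ (2*α) * (1/(1-2*α) + 1/α)) * N ^ (-(2*α))) := by
  have hN0 : (0:ℝ) < N := by linarith
  have h2 : (0:ℝ) < N/2 := by linarith
  have h21 : N/2 ≤ N - 1 := by linarith
  have h2ge1 : (1:ℝ) ≤ N/2 := by linarith
  have h12 : (0:ℝ) < 1 - 2*α := by linarith
  have hNhalf : (N/2:ℝ) ^ (-(2*α)) = 2 ^ (2*α) * N ^ (-(2*α)) := by
    rw [div_rpow hN0.le (by norm_num : (0:ℝ) ≤ 2), Real.rpow_neg (by norm_num : (0:ℝ) ≤ 2),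
      div_eq_mul_inv, inv_inv, mul_comm]
  have hsplit : Ioo (0:ℝ) (N-1) = Ioo 0 (N/2) ∪ Ico (N/2) (N-1) :=
    (Set.Ioo_union_Ico_eq_Ioo h2 h21).symm
  have hdisj : Disjoint (Ioo (0:ℝ) (N/2)) (Ico (N/2) (N-1)) := by
    rw [Set.disjoint_left]; intro x hx hx'; exact absurd hx'.1 (not_le.mpr hx.2)
  rw [hsplit, lintegral_union measurableSet_Ico hdisj]
  have key1 : ∫⁻ ν in Ioo (0:ℝ) (N/2), ENNReal.ofReal (ν ^ (-(2*α)) * (N - ν) ^ (-(1+α)))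
      ≤ ENNReal.ofReal ((2:ℝ) ^ (2*α) * (1/(1-2*α)) * N ^ (-(2*α))) := by
    have step : ∀ ν ∈ Ioo (0:ℝ) (N/2), ENNReal.ofReal (ν ^ (-(2*α)) * (N - ν) ^ (-(1+α)))
        ≤ ENNReal.ofReal ((N/2) ^ (-(1+α)) * ν ^ (-(2*α))) := by
      intro ν hν
      apply ENNReal.ofReal_le_ofReal
      rw [mul_comm ((N/2) ^ (-(1+α)))]
      refine mul_le_mul_of_nonneg_left ?_ (Real.rpow_nonneg hν.1.le _)
      exact Real.rpow_le_rpow_of_nonpos h2 (by linarith [hν.2]) (by linarith)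
    have hInt : IntegrableOn (fun ν : ℝ => (N/2) ^ (-(1+α)) * ν ^ (-(2*α))) (Ioo (0:ℝ) (N/2)) := by
      apply Integrable.const_mul
      exact ((intervalIntegral.intervalIntegrable_rpow' (by linarith)).1).mono_set
        Set.Ioo_subset_Ioc_self
    have hnn : 0 ≤ᵐ[volume.restrict (Ioo (0:ℝ) (N/2))]
        fun ν : ℝ => (N/2) ^ (-(1+α)) * ν ^ (-(2*α)) := by
      refine (ae_restrict_mem measurableSet_Ioo).mono fun ν hν => ?_
      exact mul_nonneg (Real.rpow_nonneg h2.le _) (Real.rpow_nonneg hν.1.le _)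
    calc ∫⁻ ν in Ioo (0:ℝ) (N/2), ENNReal.ofReal (ν ^ (-(2*α)) * (N - ν) ^ (-(1+α)))
        ≤ ∫⁻ ν in Ioo (0:ℝ) (N/2), ENNReal.ofReal ((N/2) ^ (-(1+α)) * ν ^ (-(2*α))) := by
          refine setLIntegral_mono ?_ step
          apply Measurable.ennreal_ofReal
          exact measurable_const.mul (by fun_prop)
      _ = ENNReal.ofReal (∫ ν in Ioo (0:ℝ) (N/2), (N/2) ^ (-(1+α)) * ν ^ (-(2*α))) :=
          (ofReal_integral_eq_lintegral_ofReal hInt hnn).symm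
      _ ≤ ENNReal.ofReal ((2:ℝ) ^ (2*α) * (1/(1-2*α)) * N ^ (-(2*α))) := by
          apply ENNReal.ofReal_le_ofReal
          rw [MeasureTheory.integral_const_mul, ← integral_Ioc_eq_integral_Ioo,
            ← intervalIntegral.integral_of_le h2.le,
            integral_rpow (Or.inl (by linarith : (-1:ℝ) < -(2*α)))]
          rw [Real.zero_rpow (by linarith : -(2*α) + 1 ≠ 0), sub_zero]
          have e1 : (N/2:ℝ) ^ (-(1+α)) * ((N/2) ^ (-(2*α)+1) / (-(2*α)+1))
              = (N/2) ^ (-(3*α)) * (1/(1-2*α)) := by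
            rw [mul_div_assoc', ← Real.rpow_add h2,
              show -(1+α) + (-(2*α)+1) = -(3*α) by ring, show -(2*α)+1 = 1-2*α by ring]
            exact div_eq_mul_one_div _ _
          rw [e1]
          have e2 : (N/2:ℝ) ^ (-(3*α)) ≤ 2 ^ (2*α) * N ^ (-(2*α)) := by
            rw [← hNhalf]
            exact Real.rpow_le_rpow_of_exponent_le h2ge1 (by linarith)
          calc (N/2:ℝ) ^ (-(3*α)) * (1/(1-2*α))
              ≤ (2 ^ (2*α) * N ^ (-(2*α))) * (1/(1-2*α)) :=
                mul_le_mul_of_nonneg_right e2 (by positivity)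
            _ = 2 ^ (2*α) * (1/(1-2*α)) * N ^ (-(2*α)) := by ring
  have key2 : ∫⁻ ν in Ico (N/2) (N-1), ENNReal.ofReal (ν ^ (-(2*α)) * (N - ν) ^ (-(1+α)))
      ≤ ENNReal.ofReal ((2:ℝ) ^ (2*α) * (1/α) * N ^ (-(2*α))) := by
    have step : ∀ ν ∈ Ico (N/2) (N-1), ENNReal.ofReal (ν ^ (-(2*α)) * (N - ν) ^ (-(1+α)))
        ≤ ENNReal.ofReal ((N/2) ^ (-(2*α)) * (N - ν) ^ (-(1+α))) := by
      intro ν hν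
      apply ENNReal.ofReal_le_ofReal
      refine mul_le_mul_of_nonneg_right ?_ (Real.rpow_nonneg (by linarith [hν.2] : (0:ℝ) ≤ N - ν) _)
      exact Real.rpow_le_rpow_of_nonpos h2 hν.1 (by linarith)
    have hII : IntervalIntegrable (fun x : ℝ => (N - x) ^ (-(1+α))) volume (N/2) (N-1) := by
      have hbase : IntervalIntegrable (fun x : ℝ => x ^ (-(1+α))) volume 1 (N/2) := by
        apply intervalIntegral.intervalIntegrable_rpow
        right
        rw [Set.uIcc_of_le h2ge1]
        rintro ⟨h0, -⟩; linarith
      have := hbase.comp_sub_left N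
      rw [sub_half] at this
      exact this.symm
    have hInt : IntegrableOn (fun ν : ℝ => (N/2) ^ (-(2*α)) * (N - ν) ^ (-(1+α)))
        (Ioc (N/2) (N-1)) := by
      apply Integrable.const_mul
      exact hII.1
    have hnn : 0 ≤ᵐ[volume.restrict (Ioc (N/2) (N-1))]
        fun ν : ℝ => (N/2) ^ (-(2*α)) * (N - ν) ^ (-(1+α)) := by
      refine (ae_restrict_mem measurableSet_Ioc).mono fun ν hν => ?_
      exact mul_nonneg (Real.rpow_nonneg h2.le _) (Real.rpow_nonneg (by linarith [hν.2]) _)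
    calc ∫⁻ ν in Ico (N/2) (N-1), ENNReal.ofReal (ν ^ (-(2*α)) * (N - ν) ^ (-(1+α)))
        ≤ ∫⁻ ν in Ico (N/2) (N-1), ENNReal.ofReal ((N/2) ^ (-(2*α)) * (N - ν) ^ (-(1+α))) := by
          refine setLIntegral_mono ?_ step
          apply Measurable.ennreal_ofReal
          exact measurable_const.mul (by fun_prop)
      _ = ∫⁻ ν in Ioc (N/2) (N-1), ENNReal.ofReal ((N/2) ^ (-(2*α)) * (N - ν) ^ (-(1+α))) := by
          rw [Measure.restrict_congr_set Ico_ae_eq_Ioc]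
      _ = ENNReal.ofReal (∫ ν in Ioc (N/2) (N-1), (N/2) ^ (-(2*α)) * (N - ν) ^ (-(1+α))) :=
          (ofReal_integral_eq_lintegral_ofReal hInt hnn).symm
      _ ≤ ENNReal.ofReal ((2:ℝ) ^ (2*α) * (1/α) * N ^ (-(2*α))) := by
          apply ENNReal.ofReal_le_ofReal
          rw [MeasureTheory.integral_const_mul, ← intervalIntegral.integral_of_le h21]
          rw [intervalIntegral.integral_comp_sub_left (fun u : ℝ => u ^ (-(1+α))) N]
          rw [sub_sub_cancel, sub_half]
          have hne : (-(1+α) : ℝ) ≠ -1 := by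
            intro h
            have : α = 0 := by linarith [h]
            exact hα0.ne' this
          have hmem : (0:ℝ) ∉ Set.uIcc (1:ℝ) (N/2) := by
            rw [Set.uIcc_of_le h2ge1]; rintro ⟨h0, -⟩; linarith
          rw [integral_rpow (Or.inr ⟨hne, hmem⟩)]
          rw [Real.one_rpow, show -(1+α)+1 = -α by ring]
          have hx : (0:ℝ) ≤ (N/2:ℝ) ^ (-α) := Real.rpow_nonneg h2.le _
          have hval : ((N/2:ℝ) ^ (-α) - 1) / (-α) ≤ 1/α := by
            rw [div_neg, ← neg_div, neg_sub]
            exact (div_le_div_iff_of_pos_right hα0).mpr (by linarith)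
          calc (N/2:ℝ) ^ (-(2*α)) * (((N/2) ^ (-α) - 1) / (-α))
              ≤ (N/2) ^ (-(2*α)) * (1/α) :=
                mul_le_mul_of_nonneg_left hval (Real.rpow_nonneg h2.le _)
            _ = 2 ^ (2*α) * (1/α) * N ^ (-(2*α)) := by rw [hNhalf]; ring
  calc _ ≤ ENNReal.ofReal ((2:ℝ) ^ (2*α) * (1/(1-2*α)) * N ^ (-(2*α)))
        + ENNReal.ofReal ((2:ℝ) ^ (2*α) * (1/α) * N ^ (-(2*α))) := add_le_add key1 key2
    _ = ENNReal.ofReal (((2:ℝ) ^ (2*α) * (1/(1-2*α) + 1/α)) * N ^ (-(2*α))) := by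
        rw [← ENNReal.ofReal_add (by positivity) (by positivity)]
        congr 1; ring

private lemma sumBound {α : ℝ} (hα0 : 0 < α) (hsum : Summable (fun k : ℕ => ((k:ℝ) + 1) ^ (-(1+α))))
    {ν : ℝ} (hν : 0 < ν) :
    ∑' n : ℕ, (Ioo (0:ℝ) (((n + 2 : ℕ) : ℝ) - 1)).indicator
        (fun _ => ENNReal.ofReal ((((n + 2 : ℕ) : ℝ) - ν) ^ (-(1+α)))) ν
      ≤ ENNReal.ofReal (∑' k : ℕ, ((k:ℝ) + 1) ^ (-(1+α))) := by
  set m := ⌊ν⌋₊ with hm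
  have hmle : (m:ℝ) ≤ ν := Nat.floor_le hν.le
  have hmlt : ν < (m:ℝ) + 1 := Nat.lt_floor_add_one ν
  rw [ENNReal.ofReal_tsum_of_nonneg (fun k => Real.rpow_nonneg (by positivity) _) hsum]
  set f : ℕ → ℝ≥0∞ := fun n =>
    if m ≤ n then ENNReal.ofReal ((((n - m : ℕ):ℝ) + 1) ^ (-(1+α))) else 0 with hf
  have key : ∀ n : ℕ, (Ioo (0:ℝ) (((n + 2 : ℕ) : ℝ) - 1)).indicator
      (fun _ => ENNReal.ofReal ((((n + 2 : ℕ) : ℝ) - ν) ^ (-(1+α)))) ν ≤ f n := by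
    intro n
    by_cases hmem : ν ∈ Ioo (0:ℝ) (((n + 2 : ℕ) : ℝ) - 1)
    · rw [Set.indicator_of_mem hmem]
      have hν2 : ν < (n:ℝ) + 1 := by
        have := hmem.2; push_cast at this; linarith
      have hmn : m ≤ n := by
        have h1 : (m:ℝ) < (n:ℝ) + 1 := lt_of_le_of_lt hmle hν2
        have h2 : m < n + 1 := by exact_mod_cast h1
        omega
      rw [hf]; simp only [if_pos hmn]
      apply ENNReal.ofReal_le_ofReal
      have hcast : ((n - m : ℕ):ℝ) = (n:ℝ) - m := by
        push_cast [Nat.cast_sub hmn]; ring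
      apply Real.rpow_le_rpow_of_nonpos (by positivity) ?_ (by linarith)
      rw [hcast]
      push_cast
      linarith
    · rw [Set.indicator_of_notMem hmem]; exact zero_le
  refine le_trans (ENNReal.tsum_le_tsum key) ?_
  have inj : Function.Injective (fun k : ℕ => m + k) := add_right_injective m
  have hsupp : Function.support f ⊆ Set.range (fun k : ℕ => m + k) := by
    intro n hn
    rw [Function.mem_support] at hn
    by_cases h : m ≤ n
    · exact ⟨n - m, show m + (n - m) = n by omega⟩
    · rw [hf] at hn; simp only [if_neg h] at hn; exact absurd rfl hn
  rw [← Function.Injective.tsum_eq inj hsupp]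
  apply le_of_eq
  apply tsum_congr
  intro k
  rw [hf]
  simp only [Nat.le_add_right m k, if_pos, Nat.add_sub_cancel_left]

theorem near_diagonal_kernel_estimate (α : ℝ) (hα0 : 0 < α) (hα : α < 1/2) :
    ∃ C : ℝ, 0 < C ∧ ∀ g : ℝ → ℂ, Measurable g →
      (∫⁻ ν in Set.Ioi (0 : ℝ),
          ENNReal.ofReal (ν ^ (2 * α + 2) * ‖g ν‖ ^ 2)) < ⊤ →
      (∑' n : ℕ, ENNReal.ofReal (‖
          (∫ ν in Set.Ioo (0 : ℝ) (((n + 2 : ℕ) : ℝ) - 1),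
            (ν : ℂ) * g ν / ((((n + 2 : ℕ) : ℝ) - ν : ℝ) : ℂ))‖ ^ 2))
        ≤ ENNReal.ofReal C *
          ∫⁻ ν in Set.Ioi (0 : ℝ),
            ENNReal.ofReal (ν ^ (2 * α + 2) * ‖g ν‖ ^ 2) := by
  have h12 : (0:ℝ) < 1 - 2*α := by linarith
  have hsum : Summable (fun k : ℕ => ((k:ℝ) + 1) ^ (-(1+α))) := by
    have h1 : Summable (fun k : ℕ => ((k:ℝ)) ^ (-(1+α))) :=
      Real.summable_nat_rpow.mpr (by linarith)
    have h2 := (summable_nat_add_iff 1).mpr h1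
    refine h2.congr fun k => ?_
    push_cast
    rfl
  set K : ℝ := ∑' k : ℕ, ((k:ℝ) + 1) ^ (-(1+α)) with hK
  have hKpos : 0 < K :=
    Summable.tsum_pos hsum (fun k => Real.rpow_nonneg (by positivity) _) 0
      (Real.rpow_pos_of_pos (by norm_num) _)
  set C₂ : ℝ := (2:ℝ) ^ (2*α) * (1/(1-2*α) + 1/α) with hC2
  have hC2pos : 0 < C₂ :=
    mul_pos (Real.rpow_pos_of_pos two_pos _)
      (add_pos (div_pos one_pos h12) (div_pos one_pos hα0))
  refine ⟨C₂ * K, mul_pos hC2pos hKpos, ?_⟩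
  intro g hg _
  have habs : Measurable fun ν : ℝ => ‖g ν‖ :=
    hg.norm
  set h : ℝ → ℝ≥0∞ := fun ν => ENNReal.ofReal (ν ^ (2 * α + 2) * ‖g ν‖ ^ 2) with hh
  have hhm : Measurable h := by
    apply Measurable.ennreal_ofReal
    exact (by fun_prop : Measurable fun ν : ℝ => ν ^ (2*α+2)).mul (habs.pow_const 2)
  have claim : ∀ n : ℕ,
      ENNReal.ofReal (‖∫ ν in Set.Ioo (0 : ℝ) (((n + 2 : ℕ) : ℝ) - 1),
          (ν : ℂ) * g ν / ((((n + 2 : ℕ) : ℝ) - ν : ℝ) : ℂ)‖ ^ 2)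
        ≤ ENNReal.ofReal C₂ * ∫⁻ ν in Set.Ioo (0 : ℝ) (((n + 2 : ℕ) : ℝ) - 1),
            h ν * ENNReal.ofReal ((((n + 2 : ℕ) : ℝ) - ν) ^ (-(1+α))) := by
    intro n
    have hN2 : (2:ℝ) ≤ ((n + 2 : ℕ) : ℝ) := by push_cast; linarith [n.cast_nonneg (α := ℝ)]
    set N : ℝ := ((n + 2 : ℕ) : ℝ) with hNdef
    have hN0 : (0:ℝ) < N := by linarith
    have hset : MeasurableSet (Set.Ioo (0:ℝ) (N - 1)) := measurableSet_Ioo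
    set P : ℝ → ℝ≥0∞ :=
      fun ν => ENNReal.ofReal (ν ^ (α+1) * ‖g ν‖ * (N - ν) ^ (-((1-α)/2))) with hP
    set Q : ℝ → ℝ≥0∞ := fun ν => ENNReal.ofReal (ν ^ (-α) * (N - ν) ^ (-((1+α)/2))) with hQ
    have hPm : Measurable P := by
      apply Measurable.ennreal_ofReal
      exact ((by fun_prop : Measurable fun ν : ℝ => ν ^ (α+1)).mul habs).mul (by fun_prop)
    have hQm : Measurable Q := by
      apply Measurable.ennreal_ofReal
      exact (by fun_prop : Measurable fun ν : ℝ => ν ^ (-α)).mul (by fun_prop)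
    have hFnorm : ∀ ν ∈ Set.Ioo (0:ℝ) (N-1),
        (‖(ν : ℂ) * g ν / ((N - ν : ℝ) : ℂ)‖₊ : ℝ≥0∞) = P ν * Q ν := by
      intro ν hν
      have hν0 : (0:ℝ) < ν := hν.1
      have hNν : (0:ℝ) < N - ν := by
        have := hν.2; linarith
      have nnP : (0:ℝ) ≤ ν ^ (α+1) * ‖g ν‖ * (N - ν) ^ (-((1-α)/2)) :=
        mul_nonneg (mul_nonneg (Real.rpow_nonneg hν0.le _) (norm_nonneg _))
          (Real.rpow_nonneg hNν.le _)
      simp only [hP, hQ]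
      rw [← enorm_eq_nnnorm, ← ofReal_norm, ← ENNReal.ofReal_mul nnP]
      congr 1
      have hnorm : ‖(ν : ℂ) * g ν / ((N - ν : ℝ) : ℂ)‖ = ν * ‖g ν‖ * (N - ν)⁻¹ := by
        rw [norm_div, norm_mul, Complex.norm_real, Complex.norm_real,
          Real.norm_eq_abs, Real.norm_eq_abs, abs_of_pos hν0, abs_of_pos hNν, div_eq_mul_inv]
      rw [hnorm]
      have e1 : ν ^ (α+1) * ν ^ (-α) = ν := by
        rw [← Real.rpow_add hν0, show α+1+(-α) = 1 by ring, Real.rpow_one]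
      have e2 : (N-ν) ^ (-((1-α)/2)) * (N-ν) ^ (-((1+α)/2)) = (N-ν)⁻¹ := by
        rw [← Real.rpow_add hNν, show -((1-α)/2) + -((1+α)/2) = -1 by ring, Real.rpow_neg_one]
      calc ν * ‖g ν‖ * (N - ν)⁻¹
          = (ν ^ (α+1) * ν ^ (-α)) * ‖g ν‖
            * ((N-ν) ^ (-((1-α)/2)) * (N-ν) ^ (-((1+α)/2))) := by rw [e1, e2]
        _ = ν ^ (α+1) * ‖g ν‖ * (N - ν) ^ (-((1-α)/2))
            * (ν ^ (-α) * (N - ν) ^ (-((1+α)/2))) := by ring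
    have hPsq : ∀ ν ∈ Set.Ioo (0:ℝ) (N-1),
        P ν ^ (2:ℝ) = h ν * ENNReal.ofReal ((N - ν) ^ (-(1-α))) := by
      intro ν hν
      have hν0 : (0:ℝ) < ν := hν.1
      have hNν : (0:ℝ) < N - ν := by
        have := hν.2; linarith
      have nn : (0:ℝ) ≤ ν ^ (α+1) * ‖g ν‖ * (N - ν) ^ (-((1-α)/2)) :=
        mul_nonneg (mul_nonneg (Real.rpow_nonneg hν0.le _) (norm_nonneg _))
          (Real.rpow_nonneg hNν.le _)
      have hb : ‖g ν‖ ^ (2:ℝ) = ‖g ν‖ ^ (2:ℕ) := by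
        rw [← Real.rpow_natCast (‖g ν‖) 2]; norm_num
      have hreal : (ν ^ (α+1) * ‖g ν‖ * (N - ν) ^ (-((1-α)/2))) ^ (2:ℝ)
          = (ν ^ (2*α+2) * ‖g ν‖ ^ 2) * (N - ν) ^ (-(1-α)) := by
        rw [Real.mul_rpow (mul_nonneg (Real.rpow_nonneg hν0.le _) (norm_nonneg _))
            (Real.rpow_nonneg hNν.le _),
          Real.mul_rpow (Real.rpow_nonneg hν0.le _) (norm_nonneg _),
          ← Real.rpow_mul hν0.le, ← Real.rpow_mul hNν.le,
          show (α+1)*2 = 2*α+2 by ring, show -((1-α)/2)*2 = -(1-α) by ring, hb]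
      simp only [hP, hh]
      rw [ENNReal.ofReal_rpow_of_nonneg nn (by norm_num), hreal,
        ENNReal.ofReal_mul (by positivity)]
    have hQsq : ∀ ν ∈ Set.Ioo (0:ℝ) (N-1),
        Q ν ^ (2:ℝ) = ENNReal.ofReal (ν ^ (-(2*α)) * (N - ν) ^ (-(1+α))) := by
      intro ν hν
      have hν0 : (0:ℝ) < ν := hν.1
      have hNν : (0:ℝ) < N - ν := by
        have := hν.2; linarith
      have nn : (0:ℝ) ≤ ν ^ (-α) * (N - ν) ^ (-((1+α)/2)) :=
        mul_nonneg (Real.rpow_nonneg hν0.le _) (Real.rpow_nonneg hNν.le _)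
      have hreal : (ν ^ (-α) * (N - ν) ^ (-((1+α)/2))) ^ (2:ℝ)
          = ν ^ (-(2*α)) * (N - ν) ^ (-(1+α)) := by
        rw [Real.mul_rpow (Real.rpow_nonneg hν0.le _) (Real.rpow_nonneg hNν.le _),
          ← Real.rpow_mul hν0.le, ← Real.rpow_mul hNν.le,
          show (-α)*2 = -(2*α) by ring, show -((1+α)/2)*2 = -(1+α) by ring]
      simp only [hQ]
      rw [ENNReal.ofReal_rpow_of_nonneg nn (by norm_num), hreal]
    have stepA : ENNReal.ofReal
        (‖∫ ν in Set.Ioo (0:ℝ) (N-1), (ν:ℂ) * g ν / ((N - ν : ℝ):ℂ)‖ ^ 2)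
        ≤ (∫⁻ ν in Set.Ioo (0:ℝ) (N-1), (‖(ν:ℂ) * g ν / ((N - ν : ℝ):ℂ)‖₊ : ℝ≥0∞)) ^ 2 := by
      rw [ENNReal.ofReal_pow (norm_nonneg _), ofReal_norm]
      exact pow_le_pow_left₀ (zero_le) (enorm_integral_le_lintegral_enorm _) 2
    have hconj : Real.HolderConjugate 2 2 := by rw [Real.holderConjugate_iff]; norm_num
    have stepC := ENNReal.lintegral_mul_le_Lp_mul_Lq
      (volume.restrict (Set.Ioo (0:ℝ) (N-1))) hconj hPm.aemeasurable hQm.aemeasurable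
    simp only [Pi.mul_apply] at stepC
    have sq : ∀ x y : ℝ≥0∞, (x ^ (1/2:ℝ) * y ^ (1/2:ℝ)) ^ 2 = x * y := by
      intro x y
      rw [mul_pow, ← ENNReal.rpow_natCast (x ^ (1/2:ℝ)) 2, ← ENNReal.rpow_natCast (y ^ (1/2:ℝ)) 2,
        ← ENNReal.rpow_mul, ← ENNReal.rpow_mul,
        show (1/2:ℝ) * ((2:ℕ):ℝ) = 1 by norm_num, ENNReal.rpow_one, ENNReal.rpow_one]
    calc (ENNReal.ofReal (‖
            (∫ ν in Set.Ioo (0:ℝ) (N-1), (ν:ℂ) * g ν / ((N - ν : ℝ):ℂ))‖ ^ 2) : ℝ≥0∞)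
        ≤ (∫⁻ ν in Set.Ioo (0:ℝ) (N-1), (‖(ν:ℂ) * g ν / ((N - ν : ℝ):ℂ)‖₊ : ℝ≥0∞)) ^ 2 := stepA
      _ = (∫⁻ ν in Set.Ioo (0:ℝ) (N-1), P ν * Q ν) ^ 2 := by
          congr 1
          exact setLIntegral_congr_fun hset hFnorm
      _ ≤ ((∫⁻ ν in Set.Ioo (0:ℝ) (N-1), P ν ^ (2:ℝ)) ^ (1/2:ℝ)
            * (∫⁻ ν in Set.Ioo (0:ℝ) (N-1), Q ν ^ (2:ℝ)) ^ (1/2:ℝ)) ^ 2 :=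
          pow_le_pow_left₀ (zero_le) stepC 2
      _ = (∫⁻ ν in Set.Ioo (0:ℝ) (N-1), P ν ^ (2:ℝ))
            * (∫⁻ ν in Set.Ioo (0:ℝ) (N-1), Q ν ^ (2:ℝ)) := sq _ _
      _ = (∫⁻ ν in Set.Ioo (0:ℝ) (N-1), h ν * ENNReal.ofReal ((N - ν) ^ (-(1-α))))
            * (∫⁻ ν in Set.Ioo (0:ℝ) (N-1),
                ENNReal.ofReal (ν ^ (-(2*α)) * (N - ν) ^ (-(1+α)))) := by
          rw [setLIntegral_congr_fun hset hPsq,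
            setLIntegral_congr_fun hset hQsq]
      _ ≤ (∫⁻ ν in Set.Ioo (0:ℝ) (N-1), h ν * ENNReal.ofReal ((N - ν) ^ (-(1-α))))
            * ENNReal.ofReal (C₂ * N ^ (-(2*α))) := by
          gcongr
          rw [hC2]
          exact Jbound hα0 hα hN2
      _ ≤ ENNReal.ofReal C₂
            * ∫⁻ ν in Set.Ioo (0:ℝ) (N-1), h ν * ENNReal.ofReal ((N - ν) ^ (-(1+α))) := by
          rw [ENNReal.ofReal_mul hC2pos.le]
          rw [show ∀ X a b : ℝ≥0∞, X * (a * b) = a * (b * X) from fun X a b => by ring]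
          apply mul_le_mul_right
          rw [← lintegral_const_mul' _ _ ENNReal.ofReal_ne_top]
          refine setLIntegral_mono (hhm.mul (by fun_prop)) ?_
          intro ν hν
          have hν0 : (0:ℝ) < ν := hν.1
          have hNν : (0:ℝ) < N - ν := by
            have := hν.2; linarith
          rw [mul_left_comm]
          apply mul_le_mul_right
          rw [← ENNReal.ofReal_mul (Real.rpow_nonneg hN0.le _)]
          apply ENNReal.ofReal_le_ofReal
          have hle : N ^ (-(2*α)) ≤ (N-ν) ^ (-(2*α)) :=
            Real.rpow_le_rpow_of_nonpos hNν (by linarith) (by linarith)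
          calc N ^ (-(2*α)) * (N-ν) ^ (-(1-α))
              ≤ (N-ν) ^ (-(2*α)) * (N-ν) ^ (-(1-α)) :=
                mul_le_mul_of_nonneg_right hle (Real.rpow_nonneg hNν.le _)
            _ = (N-ν) ^ (-(1+α)) := by
                rw [← Real.rpow_add hNν]; congr 1; ring
  calc (∑' n : ℕ, ENNReal.ofReal (‖
          (∫ ν in Set.Ioo (0 : ℝ) (((n + 2 : ℕ) : ℝ) - 1),
            (ν : ℂ) * g ν / ((((n + 2 : ℕ) : ℝ) - ν : ℝ) : ℂ))‖ ^ 2))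
      ≤ ∑' n : ℕ, (ENNReal.ofReal C₂ * ∫⁻ ν in Set.Ioo (0 : ℝ) (((n + 2 : ℕ) : ℝ) - 1),
            h ν * ENNReal.ofReal ((((n + 2 : ℕ) : ℝ) - ν) ^ (-(1+α)))) :=
        ENNReal.tsum_le_tsum claim
    _ = ENNReal.ofReal C₂ * ∑' n : ℕ, ∫⁻ ν in Set.Ioo (0 : ℝ) (((n + 2 : ℕ) : ℝ) - 1),
            h ν * ENNReal.ofReal ((((n + 2 : ℕ) : ℝ) - ν) ^ (-(1+α))) := ENNReal.tsum_mul_left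
    _ = ENNReal.ofReal C₂ * ∑' n : ℕ, ∫⁻ ν in Set.Ioi (0:ℝ),
          (Set.Ioo (0:ℝ) (((n + 2 : ℕ) : ℝ) - 1)).indicator
            (fun ν => h ν * ENNReal.ofReal ((((n + 2 : ℕ) : ℝ) - ν) ^ (-(1+α)))) ν := by
        congr 1
        refine tsum_congr fun n => ?_
        rw [lintegral_indicator measurableSet_Ioo, Measure.restrict_restrict measurableSet_Ioo,
          Set.inter_eq_left.mpr (fun x hx => hx.1)]
    _ = ENNReal.ofReal C₂ * ∫⁻ ν in Set.Ioi (0:ℝ), ∑' n : ℕ,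
          (Set.Ioo (0:ℝ) (((n + 2 : ℕ) : ℝ) - 1)).indicator
            (fun ν => h ν * ENNReal.ofReal ((((n + 2 : ℕ) : ℝ) - ν) ^ (-(1+α)))) ν := by
        congr 1
        exact (lintegral_tsum fun n =>
          ((hhm.mul (by fun_prop)).indicator measurableSet_Ioo).aemeasurable).symm
    _ ≤ ENNReal.ofReal C₂ * ∫⁻ ν in Set.Ioi (0:ℝ), h ν * ENNReal.ofReal K := by
        apply mul_le_mul_right
        refine setLIntegral_mono (hhm.mul measurable_const) ?_
        intro ν hν
        have hν0 : (0:ℝ) < ν := hν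
        have e : ∀ n : ℕ, (Set.Ioo (0:ℝ) (((n + 2 : ℕ) : ℝ) - 1)).indicator
              (fun ν' => h ν' * ENNReal.ofReal ((((n + 2 : ℕ) : ℝ) - ν') ^ (-(1+α)))) ν
            = h ν * (Set.Ioo (0:ℝ) (((n + 2 : ℕ) : ℝ) - 1)).indicator
              (fun _ => ENNReal.ofReal ((((n + 2 : ℕ) : ℝ) - ν) ^ (-(1+α)))) ν := by
          intro n
          by_cases hm : ν ∈ Set.Ioo (0:ℝ) (((n + 2 : ℕ) : ℝ) - 1)
          · rw [Set.indicator_of_mem hm, Set.indicator_of_mem hm]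
          · rw [Set.indicator_of_notMem hm, Set.indicator_of_notMem hm, mul_zero]
        rw [tsum_congr e, ENNReal.tsum_mul_left]
        exact mul_le_mul_right (sumBound hα0 hsum hν0) _
    _ = ENNReal.ofReal (C₂ * K) * ∫⁻ ν in Set.Ioi (0:ℝ), h ν := by
        rw [lintegral_mul_const' _ _ ENNReal.ofReal_ne_top, ENNReal.ofReal_mul hC2pos.le]
        ring
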